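/- arXiv:2505.20112 — 2 statements merged into one kernel-verified Lean document; each statement's English description precedes it below -/
import Mathlib

section
/- Eckart–Young–Mirsky theorem (Frobenius norm, optimality of SVD truncation): Let A be a real m×n matrix with singular value decomposition A = U Σ Vᵀ, where U is an m×m orthogonal matrix, V is an n×n orthogonal matrix, and Σ is the m×n matrix with Σᵢⱼ = σᵢ if i = j (as natural-number indices) and Σᵢⱼ = 0 otherwise, with σ₀ ≥ σ₁ ≥ … ≥ σ_{min(m,n)−1} ≥ 0. For 0 ≤ r ≤ min(m,n), define the rank-r truncation A_r = U Σ_r Vᵀ, where Σ_r agrees with Σ on entries (i,j) with i = j < r and is 0 elsewhere. Then for every real m×n matrix B with rank(B) ≤ r, one has ‖A − A_r‖_F ≤ ‖A − B‖_F. -/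
open Matrix

/-- The Frobenius norm of a real matrix: `sqrt (∑ i j, (M i j)^2)`. -/
noncomputable def frobNorm {m n : ℕ} (M : Matrix (Fin m) (Fin n) ℝ) : ℝ :=
  Real.sqrt (∑ i, ∑ j, (M i j) ^ 2)

namespace EYMaux

noncomputable def F2 {m n : ℕ} (M : Matrix (Fin m) (Fin n) ℝ) : ℝ := ∑ i, ∑ j, (M i j)^2

lemma F2_nonneg {m n : ℕ} (M : Matrix (Fin m) (Fin n) ℝ) : 0 ≤ F2 M := by
  apply Finset.sum_nonneg; intro i _; apply Finset.sum_nonneg; intro j _; positivity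

lemma F2_eq_trace {m n : ℕ} (M : Matrix (Fin m) (Fin n) ℝ) : F2 M = (Mᵀ * M).trace := by
  unfold F2
  rw [Matrix.trace]
  simp only [Matrix.diag_apply, Matrix.mul_apply, Matrix.transpose_apply]
  rw [Finset.sum_comm]
  simp [sq]

lemma F2_conj {m n : ℕ} (M : Matrix (Fin m) (Fin n) ℝ)
    (U : Matrix (Fin m) (Fin m) ℝ) (V : Matrix (Fin n) (Fin n) ℝ)
    (hU : Uᵀ * U = 1) (hV : Vᵀ * V = 1) :
    F2 (U * M * Vᵀ) = F2 M := by
  rw [F2_eq_trace, F2_eq_trace]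
  have h1 : (U * M * Vᵀ)ᵀ * (U * M * Vᵀ) = V * (Mᵀ * M) * Vᵀ := by
    simp only [Matrix.transpose_mul, Matrix.transpose_transpose, Matrix.mul_assoc]
    rw [← Matrix.mul_assoc Uᵀ U, hU, Matrix.one_mul]
  rw [h1, Matrix.mul_assoc, Matrix.trace_mul_comm, Matrix.mul_assoc, hV, Matrix.mul_one]

lemma sum_fin_ite {m : ℕ} (n : ℕ) (f : ℕ → ℝ) :
    ∑ i : Fin m, (if (i:ℕ) < n then f i else 0) = ∑ k ∈ Finset.range (min m n), f k := by
  rw [Fin.sum_univ_eq_sum_range (fun k => if k < n then f k else 0) m]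
  rw [← Finset.sum_subset (Finset.range_subset_range.2 (min_le_left m n))]
  · apply Finset.sum_congr rfl
    intro k hk
    rw [Finset.mem_range] at hk
    rw [if_pos (lt_of_lt_of_le hk (min_le_right m n))]
  · intro k hk hk2
    rw [Finset.mem_range] at *
    rw [if_neg]; omega

lemma count_sum {n r : ℕ} (hrn : r ≤ n) (a : ℝ) :
    ∑ k ∈ Finset.range n, (if r ≤ k then a else 0) = ((n:ℝ) - r) * a := by
  rw [← Finset.sum_filter]
  have hf : (Finset.range n).filter (fun k => r ≤ k) = Finset.Ico r n := by
    ext k; simp [Finset.mem_range, Finset.mem_Ico]; omega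
  rw [hf, Finset.sum_const, Nat.card_Ico, nsmul_eq_mul, Nat.cast_sub hrn]

lemma rearr (n r : ℕ) (hrn : r ≤ n) (c t : ℕ → ℝ)
    (hc0 : ∀ k, k < n → 0 ≤ c k)
    (hcm : ∀ j k, j ≤ k → k < n → c k ≤ c j)
    (ht0 : ∀ k, k < n → 0 ≤ t k) (ht1 : ∀ k, k < n → t k ≤ 1)
    (hsum : (n:ℝ) - r ≤ ∑ k ∈ Finset.range n, t k) :
    ∑ k ∈ Finset.range n, (if r ≤ k then c k else 0) ≤ ∑ k ∈ Finset.range n, c k * t k := by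
  rcases eq_or_lt_of_le hrn with h | h
  · have h1 : ∑ k ∈ Finset.range n, (if r ≤ k then c k else 0) = 0 := by
      apply Finset.sum_eq_zero; intro k hk; rw [Finset.mem_range] at hk
      rw [if_neg (by omega)]
    rw [h1]
    apply Finset.sum_nonneg; intro k hk; rw [Finset.mem_range] at hk
    exact mul_nonneg (hc0 k hk) (ht0 k hk)
  · set cr := c r with hcr
    have hcr0 : 0 ≤ cr := hc0 r h
    have key : ∀ k ∈ Finset.range n,
        cr * t k - (if r ≤ k then cr else 0) ≤ c k * t k - (if r ≤ k then c k else 0) := by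
      intro k hk; rw [Finset.mem_range] at hk
      by_cases hrk : r ≤ k
      · rw [if_pos hrk, if_pos hrk]
        have h1 : c k ≤ cr := hcm r k hrk hk
        have h2 : t k ≤ 1 := ht1 k hk
        nlinarith
      · rw [if_neg hrk, if_neg hrk]
        have h1 : cr ≤ c k := hcm k r (by omega) h
        have h2 : 0 ≤ t k := ht0 k hk
        nlinarith
    have hs := Finset.sum_le_sum key
    rw [Finset.sum_sub_distrib, Finset.sum_sub_distrib] at hs
    have hc : ∑ k ∈ Finset.range n, (if r ≤ k then cr else 0) = ((n:ℝ) - r) * cr :=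
      count_sum hrn cr
    have hl : 0 ≤ ∑ k ∈ Finset.range n, cr * t k - ((n:ℝ) - r) * cr := by
      rw [← Finset.mul_sum]
      nlinarith
    rw [hc] at hs
    linarith

lemma sum_diag_mul {n : ℕ} (i : ℕ) (a : ℝ) (v : Fin n → ℝ) :
    ∑ j : Fin n, (if i = (j:ℕ) then a else 0) * v j
      = if h : i < n then a * v ⟨i, h⟩ else 0 := by
  split_ifs with h
  · rw [Finset.sum_eq_single (⟨i, h⟩ : Fin n)]
    · simp
    · intro j _ hj
      rw [if_neg, zero_mul]
      intro hij
      exact hj (Fin.ext (by simp only [Fin.val_mk]; omega))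
    · simp
  · apply Finset.sum_eq_zero; intro j _
    rw [if_neg, zero_mul]
    have := j.isLt; omega

lemma sum_diag_sq {n : ℕ} (i : ℕ) (a : ℝ) :
    ∑ j : Fin n, (if i = (j:ℕ) then a else 0)^2 = if i < n then a^2 else 0 := by
  split_ifs with h
  · rw [Finset.sum_eq_single (⟨i, h⟩ : Fin n)]
    · simp
    · intro j _ hj
      rw [if_neg, zero_pow two_ne_zero]
      intro hij
      exact hj (Fin.ext (by simp only [Fin.val_mk]; omega))
    · simp
  · apply Finset.sum_eq_zero; intro j _
    rw [if_neg, zero_pow two_ne_zero]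
    have := j.isLt; omega

lemma exists_orthonormal_ker {m n r : ℕ} (C : Matrix (Fin m) (Fin n) ℝ)
    (hC : C.rank ≤ r) :
    ∃ (d : ℕ) (w : Fin d → EuclideanSpace ℝ (Fin n)),
      Orthonormal ℝ w ∧ (∀ k (i : Fin m), ∑ j, C i j * w k j = 0) ∧ (n:ℝ) - r ≤ d := by
  classical
  set L := Matrix.toEuclideanLin C with hL
  set K := LinearMap.ker L with hK
  set en := WithLp.linearEquiv 2 ℝ (Fin n → ℝ)
  set em := WithLp.linearEquiv 2 ℝ (Fin m → ℝ)
  have h1 : L = (em.symm.toLinearMap) ∘ₗ (C.mulVecLin ∘ₗ en.toLinearMap) := by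
    ext x
    rfl
  have hrange : Module.finrank ℝ (LinearMap.range L) = C.rank := by
    rw [h1, LinearMap.range_comp, LinearMap.range_comp, LinearEquiv.range,
      Submodule.map_top]
    rw [LinearEquiv.finrank_map_eq]
    rfl
  have hrn' := LinearMap.finrank_range_add_finrank_ker L
  rw [hrange, finrank_euclideanSpace_fin] at hrn'
  set d := Module.finrank ℝ K with hd
  set b := stdOrthonormalBasis ℝ K with hb
  refine ⟨d, fun k => (b k : EuclideanSpace ℝ (Fin n)), ?_, ?_, ?_⟩
  · exact b.orthonormal.comp_linearIsometry K.subtypeₗᵢ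
  · intro k i
    have hmem : ((b k : K) : EuclideanSpace ℝ (Fin n)) ∈ K := SetLike.coe_mem _
    have hmem' : L (((b k : K) : EuclideanSpace ℝ (Fin n))) = 0 := hmem
    have h2 : C *ᵥ (WithLp.equiv 2 (Fin n → ℝ) ((b k : K) : EuclideanSpace ℝ (Fin n))) = 0 := by
      have := congrArg (WithLp.equiv 2 (Fin m → ℝ)) hmem'
      rwa [WithLp.equiv_apply, WithLp.equiv_apply, Matrix.ofLp_toEuclideanLin_apply, WithLp.ofLp_zero] at this
    have h3 := congrFun h2 i
    simpa [Matrix.mulVec, dotProduct] using h3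
  · have hn : n ≤ r + d := by omega
    have : (n:ℝ) ≤ (r:ℝ) + d := by exact_mod_cast hn
    linarith

lemma t_le_one {n d : ℕ} {w : Fin d → EuclideanSpace ℝ (Fin n)} (hw : Orthonormal ℝ w)
    (j : Fin n) : ∑ k, (w k j)^2 ≤ 1 := by
  have h := hw.sum_inner_products_le (s := Finset.univ) (EuclideanSpace.single j (1:ℝ))
  rw [EuclideanSpace.norm_single] at h
  simp only [EuclideanSpace.inner_single_right, _root_.map_one, one_mul, RCLike.star_def] at h
  calc ∑ k, (w k j)^2 = ∑ k, ‖(starRingEnd ℝ) (w k j)‖^2 := by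
        apply Finset.sum_congr rfl; intro k _
        simp [Real.norm_eq_abs, sq_abs]
      _ ≤ ‖(1:ℝ)‖^2 := h
      _ = 1 := by norm_num

lemma row_bessel {n d : ℕ} {w : Fin d → EuclideanSpace ℝ (Fin n)} (hw : Orthonormal ℝ w)
    (v : Fin n → ℝ) :
    ∑ k, (∑ j, v j * w k j)^2 ≤ ∑ j, (v j)^2 := by
  have h := hw.sum_inner_products_le (s := Finset.univ) ((WithLp.equiv 2 (Fin n → ℝ)).symm v)
  have hnorm : ‖(WithLp.equiv 2 (Fin n → ℝ)).symm v‖^2 = ∑ j, (v j)^2 := by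
    rw [EuclideanSpace.norm_eq, Real.sq_sqrt (by positivity)]
    apply Finset.sum_congr rfl; intro j _
    simp [Real.norm_eq_abs, sq_abs]
  rw [hnorm] at h
  calc ∑ k, (∑ j, v j * w k j)^2
      = ∑ k, ‖(inner ℝ (w k) ((WithLp.equiv 2 (Fin n → ℝ)).symm v) : ℝ)‖^2 := by
        apply Finset.sum_congr rfl; intro k _
        rw [PiLp.inner_apply]
        simp only [RCLike.inner_apply, conj_trivial]
        rw [Real.norm_eq_abs, sq_abs]
        congr 1
      _ ≤ ∑ j, (v j)^2 := h

lemma sum_t {n d : ℕ} {w : Fin d → EuclideanSpace ℝ (Fin n)} (hw : Orthonormal ℝ w) :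
    ∑ j, ∑ k, (w k j)^2 = d := by
  rw [Finset.sum_comm]
  have h : ∀ k, ∑ j, (w k j)^2 = 1 := by
    intro k
    have hn := hw.1 k
    have hthis := EuclideanSpace.norm_eq (w k)
    rw [hn] at hthis
    have hS : (0:ℝ) ≤ ∑ j, ‖w k j‖^2 := Finset.sum_nonneg fun j _ => by positivity
    have h1 : ∑ j, ‖w k j‖^2 = 1 := by nlinarith [Real.sq_sqrt hS]
    rw [← h1]
    apply Finset.sum_congr rfl; intro j _
    simp [Real.norm_eq_abs, sq_abs]
  simp [h]

end EYMaux

/-- **Eckart–Young–Mirsky theorem** (Frobenius norm): given a singular value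
decomposition `A = U Σ Vᵀ` with nonincreasing nonnegative singular values `σ`,
the rank-`r` SVD truncation `A_r = U Σ_r Vᵀ` is a best rank-`r` approximation of `A`
in the Frobenius norm. -/
theorem eckart_young_mirsky {m n : ℕ}
    (A Sig : Matrix (Fin m) (Fin n) ℝ)
    (U : Matrix (Fin m) (Fin m) ℝ) (V : Matrix (Fin n) (Fin n) ℝ)
    (σ : ℕ → ℝ)
    (hU : Uᵀ * U = 1) (hU' : U * Uᵀ = 1)
    (hV : Vᵀ * V = 1) (hV' : V * Vᵀ = 1)
    (hSig : ∀ (i : Fin m) (j : Fin n), Sig i j = if (i : ℕ) = (j : ℕ) then σ (i : ℕ) else 0)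
    (hmono : ∀ i : ℕ, i + 1 < min m n → σ (i + 1) ≤ σ i)
    (hnonneg : ∀ i : ℕ, i < min m n → 0 ≤ σ i)
    (hA : A = U * Sig * Vᵀ)
    (r : ℕ) (hr : r ≤ min m n)
    (Ar : Matrix (Fin m) (Fin n) ℝ)
    (hAr : Ar = U * (Matrix.of fun (i : Fin m) (j : Fin n) =>
      if (i : ℕ) = (j : ℕ) ∧ (i : ℕ) < r then σ (i : ℕ) else 0) * Vᵀ)
    (B : Matrix (Fin m) (Fin n) ℝ) (hB : B.rank ≤ r) :
    frobNorm (A - Ar) ≤ frobNorm (A - B) := by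
  classical
  have hrn : r ≤ n := le_trans hr (min_le_right m n)
  have hσm : ∀ j k : ℕ, j ≤ k → k < min m n → σ k ≤ σ j := by
    intro j k hjk hk
    induction k with
    | zero =>
      have : j = 0 := by omega
      subst this; exact le_refl _
    | succ k ih =>
      rcases Nat.eq_or_lt_of_le hjk with h | h
      · subst h; exact le_refl _
      · exact le_trans (hmono k hk) (ih (by omega) (by omega))
  set Sigr : Matrix (Fin m) (Fin n) ℝ := Matrix.of fun (i : Fin m) (j : Fin n) =>
      if (i : ℕ) = (j : ℕ) ∧ (i : ℕ) < r then σ (i : ℕ) else 0 with hSigr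
  set C : Matrix (Fin m) (Fin n) ℝ := Uᵀ * B * V with hC
  have hBC : U * C * Vᵀ = B := by
    rw [hC]
    simp only [← Matrix.mul_assoc]
    rw [hU', Matrix.one_mul, Matrix.mul_assoc B V Vᵀ, hV', Matrix.mul_one]
  have hAB : A - B = U * (Sig - C) * Vᵀ := by
    rw [hA, ← hBC, Matrix.mul_sub, Matrix.sub_mul]
  have hAAr : A - Ar = U * (Sig - Sigr) * Vᵀ := by
    rw [hA, hAr, Matrix.mul_sub, Matrix.sub_mul]
  have hCr : C.rank ≤ r :=
    le_trans (le_trans (Matrix.rank_mul_le_left (Uᵀ * B) V)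
      (Matrix.rank_mul_le_right Uᵀ B)) hB
  show Real.sqrt (EYMaux.F2 (A - Ar)) ≤ Real.sqrt (EYMaux.F2 (A - B))
  apply Real.sqrt_le_sqrt
  rw [hAB, hAAr, EYMaux.F2_conj _ U V hU hV, EYMaux.F2_conj _ U V hU hV]
  obtain ⟨d, w, hw, hker, hd⟩ := EYMaux.exists_orthonormal_ker C hCr
  set c : ℕ → ℝ := fun k => if k < min m n then σ k ^ 2 else 0 with hc
  set t : ℕ → ℝ := fun j => if h : j < n then ∑ k, (w k ⟨j, h⟩)^2 else 0 with ht
  -- Step A : F2 (Sig - Sigr) = ∑ k ∈ range n, if r ≤ k then c k else 0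
  have hD : ∀ (i : Fin m) (j : Fin n), (Sig - Sigr) i j
      = if (i:ℕ) = (j:ℕ) then (if r ≤ (i:ℕ) then σ (i:ℕ) else 0) else 0 := by
    intro i j
    rw [Matrix.sub_apply, hSig i j, hSigr]
    simp only [Matrix.of_apply]
    by_cases h1 : (i:ℕ) = (j:ℕ)
    · by_cases h2 : (i:ℕ) < r
      · rw [if_pos h1, if_pos ⟨h1, h2⟩, if_pos h1, if_neg (by omega)]; ring
      · rw [if_pos h1, if_neg (by tauto), if_pos h1, if_pos (by omega)]; ring
    · rw [if_neg h1, if_neg (by tauto), if_neg h1]; ring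
  have hstepA : EYMaux.F2 (Sig - Sigr)
      = ∑ k ∈ Finset.range n, (if r ≤ k then c k else 0) := by
    have h1 : EYMaux.F2 (Sig - Sigr)
        = ∑ i : Fin m, (if (i:ℕ) < n then (if r ≤ (i:ℕ) then σ (i:ℕ) else 0)^2 else 0) := by
      unfold EYMaux.F2
      apply Finset.sum_congr rfl; intro i _
      calc ∑ j, ((Sig - Sigr) i j)^2
          = ∑ j : Fin n, (if (i:ℕ) = (j:ℕ) then (if r ≤ (i:ℕ) then σ (i:ℕ) else 0) else 0)^2 := by
            apply Finset.sum_congr rfl; intro j _; rw [hD]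
        _ = _ := EYMaux.sum_diag_sq _ _
    rw [h1, EYMaux.sum_fin_ite n (fun k => (if r ≤ k then σ k else 0)^2)]
    rw [← Finset.sum_subset (Finset.range_subset_range.2 (min_le_right m n))]
    · apply Finset.sum_congr rfl
      intro k hk
      rw [Finset.mem_range] at hk
      simp only [hc]
      split_ifs with h1 h2 <;> first | ring | (exfalso; omega)
    · intro k hk hk2
      rw [Finset.mem_range] at *
      simp only [hc]
      split_ifs <;> first | rfl | (exfalso; omega)
  rw [hstepA]
  -- Step B : bessel bound
  have hSigrow : ∀ (i : Fin m) (k : Fin d), ∑ j, (Sig - C) i j * w k j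
      = if h : (i:ℕ) < n then σ (i:ℕ) * w k ⟨(i:ℕ), h⟩ else 0 := by
    intro i k
    have h1 : ∑ j, (Sig - C) i j * w k j
        = ∑ j, Sig i j * w k j - ∑ j, C i j * w k j := by
      rw [← Finset.sum_sub_distrib]
      apply Finset.sum_congr rfl; intro j _
      rw [Matrix.sub_apply]; ring
    rw [h1, hker k i, sub_zero]
    have h2 : ∑ j, Sig i j * w k j
        = ∑ j : Fin n, (if (i:ℕ) = (j:ℕ) then σ (i:ℕ) else 0) * w k j := by
      apply Finset.sum_congr rfl; intro j _; rw [hSig]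
    rw [h2, EYMaux.sum_diag_mul]
  have hmain : ∑ i : Fin m, ∑ k, (∑ j, (Sig - C) i j * w k j)^2
      = ∑ i : Fin m, (if (i:ℕ) < n then σ (i:ℕ)^2 * t (i:ℕ) else 0) := by
    apply Finset.sum_congr rfl; intro i _
    by_cases h : (i:ℕ) < n
    · rw [if_pos h]
      have ht' : t (i:ℕ) = ∑ k, (w k ⟨(i:ℕ), h⟩)^2 := by
        simp only [ht]; rw [dif_pos h]
      rw [ht', Finset.mul_sum]
      apply Finset.sum_congr rfl; intro k _
      rw [hSigrow, dif_pos h]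
      ring
    · rw [if_neg h]
      apply Finset.sum_eq_zero; intro k _
      rw [hSigrow, dif_neg h]
      ring
  have hbessel : ∑ i : Fin m, ∑ k, (∑ j, (Sig - C) i j * w k j)^2 ≤ EYMaux.F2 (Sig - C) := by
    unfold EYMaux.F2
    apply Finset.sum_le_sum
    intro i _
    exact EYMaux.row_bessel hw (fun j => (Sig - C) i j)
  have hstepB : ∑ k ∈ Finset.range n, c k * t k ≤ EYMaux.F2 (Sig - C) := by
    have h1 : ∑ k ∈ Finset.range n, c k * t k
        = ∑ k ∈ Finset.range (min m n), σ k ^2 * t k := by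
      rw [← Finset.sum_subset (Finset.range_subset_range.2 (min_le_right m n))]
      · apply Finset.sum_congr rfl
        intro k hk
        rw [Finset.mem_range] at hk
        simp only [hc]
        rw [if_pos hk]
      · intro k hk hk2
        rw [Finset.mem_range] at *
        simp only [hc]
        rw [if_neg (by omega), zero_mul]
    rw [h1, ← EYMaux.sum_fin_ite n (fun k => σ k ^2 * t k), ← hmain]
    exact hbessel
  refine le_trans ?_ hstepB
  -- Step C : rearrangement
  apply EYMaux.rearr n r hrn c t
  · intro k hk
    simp only [hc]
    split_ifs
    · positivity
    · exact le_rfl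
  · intro j k hjk hk
    simp only [hc]
    split_ifs with h1 h2
    · have h3 := hσm j k hjk h1
      have h4 := hnonneg k h1
      nlinarith
    · exfalso; omega
    · positivity
    · exact le_rfl
  · intro k hk
    simp only [ht]
    rw [dif_pos hk]
    positivity
  · intro k hk
    simp only [ht]
    rw [dif_pos hk]
    exact EYMaux.t_le_one hw ⟨k, hk⟩
  · have h1 : ∑ k ∈ Finset.range n, t k = ∑ j : Fin n, ∑ k, (w k j)^2 := by
      rw [← Fin.sum_univ_eq_sum_range (fun k => t k) n]
      apply Finset.sum_congr rfl; intro j _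
      simp only [ht]
      rw [dif_pos j.isLt]
    rw [h1, EYMaux.sum_t hw]
    exact hd
end

section
/- Existence of a best rank-r Frobenius approximation: For every real m×n matrix A and every natural number r, there exists a real m×n matrix A_r with rank(A_r) ≤ r such that for all real m×n matrices B with rank(B) ≤ r, ‖A − A_r‖_F ≤ ‖A − B‖_F. -/
open Matrix

lemma frobNorm_nonneg {m n : ℕ} (M : Matrix (Fin m) (Fin n) ℝ) : 0 ≤ frobNorm M :=
  Real.sqrt_nonneg _

lemma abs_entry_le_frobNorm {m n : ℕ} (M : Matrix (Fin m) (Fin n) ℝ) (i : Fin m) (j : Fin n) :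
    |M i j| ≤ frobNorm M := by
  rw [frobNorm, show |M i j| = Real.sqrt (|M i j| ^ 2) by rw [Real.sqrt_sq_eq_abs, abs_abs]]
  apply Real.sqrt_le_sqrt
  rw [sq_abs]
  calc M i j ^ 2 ≤ ∑ j', M i j' ^ 2 :=
        Finset.single_le_sum (f := fun j' => M i j' ^ 2) (fun _ _ => sq_nonneg _)
          (Finset.mem_univ j)
    _ ≤ ∑ i', ∑ j', M i' j' ^ 2 :=
        Finset.single_le_sum (f := fun i' => ∑ j', M i' j' ^ 2)
          (fun _ _ => Finset.sum_nonneg fun _ _ => sq_nonneg _) (Finset.mem_univ i)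

lemma matrixBox_compact {a b : ℕ} (c : ℝ) :
    IsCompact {M : Matrix (Fin a) (Fin b) ℝ | ∀ i j, M i j ∈ Set.Icc (-c) c} := by
  have : {M : Matrix (Fin a) (Fin b) ℝ | ∀ i j, M i j ∈ Set.Icc (-c) c} =
      Set.univ.pi (fun _ : Fin a => Set.univ.pi fun _ : Fin b => Set.Icc (-c) c) := by
    ext M
    constructor
    · intro h
      exact fun i _ => fun j _ => h i j
    · intro h i j
      exact h i (Set.mem_univ i) j (Set.mem_univ j)
  rw [this]
  exact isCompact_univ_pi fun i => isCompact_univ_pi fun j => isCompact_Icc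

lemma frob_continuous {m n r : ℕ} (A : Matrix (Fin m) (Fin n) ℝ) :
    Continuous (fun p : Matrix (Fin m) (Fin r) ℝ × Matrix (Fin r) (Fin n) ℝ =>
      frobNorm (A - p.1 * p.2)) := by
  simp only [frobNorm, Matrix.sub_apply, Matrix.mul_apply]
  apply Real.continuous_sqrt.comp
  apply continuous_finset_sum _ fun i _ => ?_
  apply continuous_finset_sum _ fun j _ => ?_
  apply Continuous.pow
  apply Continuous.sub continuous_const
  apply continuous_finset_sum _ fun k _ => ?_
  exact Continuous.mul
    (((continuous_apply k).comp ((continuous_apply i).comp continuous_fst)))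
    (((continuous_apply j).comp ((continuous_apply k).comp continuous_snd)))

lemma factor {m n r : ℕ} (B : Matrix (Fin m) (Fin n) ℝ) (hB : B.rank ≤ r)
    (c : ℝ) (hc : ∀ i j, |B i j| ≤ c) :
    ∃ (U : Matrix (Fin m) (Fin r) ℝ) (V : Matrix (Fin r) (Fin n) ℝ),
      U * V = B ∧ (∀ i k, |U i k| ≤ 1) ∧ (∀ k j, |V k j| ≤ m * c) := by
  classical
  set e : EuclideanSpace ℝ (Fin m) ≃ₗ[ℝ] (Fin m → ℝ) :=
    WithLp.linearEquiv 2 ℝ (Fin m → ℝ) with he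
  set W : Submodule ℝ (EuclideanSpace ℝ (Fin m)) :=
    (Submodule.span ℝ (Set.range Bᵀ)).map (e.symm : (Fin m → ℝ) →ₗ[ℝ] EuclideanSpace ℝ (Fin m)) with hW
  have hdim : Module.finrank ℝ W ≤ r := by
    rw [Matrix.rank_eq_finrank_span_cols] at hB
    exact le_trans (le_of_eq (LinearEquiv.finrank_map_eq e.symm _)) hB
  set d := Module.finrank ℝ W with hd
  have hcol : ∀ j, e.symm (Bᵀ j) ∈ W := by
    intro j
    exact Submodule.mem_map.2 ⟨Bᵀ j, Submodule.subset_span ⟨j, rfl⟩, rfl⟩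
  set b := stdOrthonormalBasis ℝ W with hb
  set u : Fin r → EuclideanSpace ℝ (Fin m) :=
    fun k => if h : (k : ℕ) < d then ((b ⟨k, h⟩ : W) : EuclideanSpace ℝ (Fin m)) else 0 with hu
  have hexp : ∀ w : EuclideanSpace ℝ (Fin m), w ∈ W →
      ∑ k : Fin r, (inner ℝ (u k) w : ℝ) • u k = w := by
    intro w hw
    have key : ∑ i : Fin d, (inner ℝ ((b i : W) : EuclideanSpace ℝ (Fin m)) w : ℝ) •
        ((b i : W) : EuclideanSpace ℝ (Fin m)) = w := by
      have h1 := b.sum_repr' (⟨w, hw⟩ : W)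
      have h2 := congrArg (Submodule.subtype W) h1
      simpa [Submodule.coe_sum, Submodule.coe_inner] using h2
    have hsum : ∑ k : Fin r, (inner ℝ (u k) w : ℝ) • u k
        = ∑ i : Fin d, (inner ℝ ((b i : W) : EuclideanSpace ℝ (Fin m)) w : ℝ) •
          ((b i : W) : EuclideanSpace ℝ (Fin m)) := by
      calc ∑ k : Fin r, (inner ℝ (u k) w : ℝ) • u k
          = ∑ k ∈ Finset.univ.map (Fin.castLEEmb hdim), (inner ℝ (u k) w : ℝ) • u k := by
            symm
            apply Finset.sum_subset (Finset.subset_univ _)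
            intro k _ hk
            have hkd : ¬ (k : ℕ) < d := fun h =>
              hk (Finset.mem_map.2 ⟨⟨k, h⟩, Finset.mem_univ _, by
                simp [Fin.castLEEmb, Fin.castLE]⟩)
            simp [hu, hkd]
        _ = ∑ i : Fin d, (inner ℝ (u (Fin.castLEEmb hdim i)) w : ℝ) • u (Fin.castLEEmb hdim i) :=
            Finset.sum_map _ _ _
        _ = ∑ i : Fin d, (inner ℝ ((b i : W) : EuclideanSpace ℝ (Fin m)) w : ℝ) •
            ((b i : W) : EuclideanSpace ℝ (Fin m)) := by
            apply Finset.sum_congr rfl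
            intro i _
            have hi : ((Fin.castLEEmb hdim i : Fin r) : ℕ) < d := i.isLt
            have : u (Fin.castLEEmb hdim i) = ((b i : W) : EuclideanSpace ℝ (Fin m)) := by
              simp only [hu]
              rw [dif_pos hi]
              congr 1
            rw [this]
    rw [hsum, key]
  have hUbd : ∀ (i : Fin m) (k : Fin r), |u k i| ≤ 1 := by
    intro i k
    have hnorm : ‖u k‖ ≤ 1 := by
      by_cases hk : (k : ℕ) < d
      · have : u k = ((b ⟨k, hk⟩ : W) : EuclideanSpace ℝ (Fin m)) := by simp [hu, hk]
        rw [this, Submodule.norm_coe]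
        exact (b.orthonormal.1 _).le
      · have : u k = 0 := by simp [hu, hk]
        simp [this]
    calc |u k i| ≤ ‖u k‖ := by
          rw [EuclideanSpace.norm_eq (u k)]
          have h1 : |u k i| = Real.sqrt (|u k i| ^ 2) := by
            rw [Real.sqrt_sq_eq_abs, abs_abs]
          rw [h1]
          apply Real.sqrt_le_sqrt
          exact Finset.single_le_sum (f := fun i => |u k i| ^ 2)
            (fun _ _ => sq_nonneg _) (Finset.mem_univ i)
      _ ≤ 1 := hnorm
  refine ⟨Matrix.of (fun i k => u k i), (Matrix.of fun i k => u k i)ᵀ * B, ?_, hUbd, ?_⟩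
  · ext i j
    have h2 := congrArg (fun v : EuclideanSpace ℝ (Fin m) => v i) (hexp _ (hcol j))
    change _ = Bᵀ j i at h2
    simp only [Matrix.mul_apply, Matrix.transpose_apply, Matrix.of_apply]
    rw [show B i j = Bᵀ j i from rfl, ← h2]
    rw [WithLp.ofLp_sum, Finset.sum_apply]
    apply Finset.sum_congr rfl
    intro k _
    rw [PiLp.smul_apply, smul_eq_mul, PiLp.inner_apply]
    simp only [RCLike.inner_apply, conj_trivial]
    rw [Finset.mul_sum, Finset.sum_mul]
    apply Finset.sum_congr rfl
    intro x _
    change _ = B x j * _ * _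
    ring
  · intro k j
    rw [Matrix.mul_apply]
    calc |∑ i, (Matrix.of fun i k => u k i)ᵀ k i * B i j|
        ≤ ∑ i, |(Matrix.of fun i k => u k i)ᵀ k i * B i j| :=
          Finset.abs_sum_le_sum_abs _ _
      _ ≤ ∑ _i : Fin m, c := by
          apply Finset.sum_le_sum
          intro i _
          rw [abs_mul]
          have h1 := hUbd i k
          have h2 := hc i j
          have hc0 : 0 ≤ c := le_trans (abs_nonneg _) h2
          calc |(Matrix.of fun i k => u k i)ᵀ k i| * |B i j|
              ≤ 1 * c := by
                apply mul_le_mul _ h2 (abs_nonneg _) zero_le_one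
                simpa using h1
            _ = c := one_mul c
      _ = m * c := by simp [Finset.sum_const, nsmul_eq_mul]

lemma exists_min_pair {m n r : ℕ} (A : Matrix (Fin m) (Fin n) ℝ) (c : ℝ) (hc : 0 ≤ c) :
    ∃ p0 : Matrix (Fin m) (Fin r) ℝ × Matrix (Fin r) (Fin n) ℝ,
      ∀ (U : Matrix (Fin m) (Fin r) ℝ) (V : Matrix (Fin r) (Fin n) ℝ),
        (∀ i k, |U i k| ≤ 1) → (∀ k j, |V k j| ≤ c) →
        frobNorm (A - p0.1 * p0.2) ≤ frobNorm (A - U * V) := by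
  have hKc : IsCompact
      ({M : Matrix (Fin m) (Fin r) ℝ | ∀ i j, M i j ∈ Set.Icc (-(1:ℝ)) 1} ×ˢ
       {M : Matrix (Fin r) (Fin n) ℝ | ∀ i j, M i j ∈ Set.Icc (-c) c}) :=
    (matrixBox_compact 1).prod (matrixBox_compact c)
  have hKne : ({M : Matrix (Fin m) (Fin r) ℝ | ∀ i j, M i j ∈ Set.Icc (-(1:ℝ)) 1} ×ˢ
       {M : Matrix (Fin r) (Fin n) ℝ | ∀ i j, M i j ∈ Set.Icc (-c) c}).Nonempty :=
    ⟨(0, 0), ⟨fun i j => by constructor <;> simp,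
      fun i j => by constructor <;> simp [hc, neg_nonpos.mpr hc]⟩⟩
  obtain ⟨p0, _, hmin⟩ := hKc.exists_isMinOn hKne ((frob_continuous A).continuousOn)
  refine ⟨p0, fun U V hU hV => ?_⟩
  exact isMinOn_iff.mp hmin (U, V)
    ⟨fun i k => abs_le.mp (hU i k), fun k j => abs_le.mp (hV k j)⟩

/-- **Existence of a best rank-`r` Frobenius approximation**: every real `m × n`
matrix `A` admits a matrix `A_r` of rank at most `r` minimizing `‖A − B‖_F`
over all matrices `B` of rank at most `r`. -/
theorem exists_best_rank_approx {m n : ℕ} (A : Matrix (Fin m) (Fin n) ℝ) (r : ℕ) :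
    ∃ Ar : Matrix (Fin m) (Fin n) ℝ, Ar.rank ≤ r ∧
      ∀ B : Matrix (Fin m) (Fin n) ℝ, B.rank ≤ r →
        frobNorm (A - Ar) ≤ frobNorm (A - B) := by
  classical
  have hc0 : (0:ℝ) ≤ 2 * frobNorm A := mul_nonneg (by norm_num) (frobNorm_nonneg A)
  have hmc0 : (0:ℝ) ≤ m * (2 * frobNorm A) := mul_nonneg (Nat.cast_nonneg m) hc0
  obtain ⟨p0, hmin⟩ := exists_min_pair (r := r) A (m * (2 * frobNorm A)) hmc0
  refine ⟨p0.1 * p0.2, ?_, ?_⟩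
  · calc (p0.1 * p0.2).rank ≤ p0.1.rank := Matrix.rank_mul_le_left _ _
      _ ≤ Fintype.card (Fin r) := Matrix.rank_le_card_width _
      _ = r := Fintype.card_fin r
  · intro B hB
    by_cases hcase : frobNorm A ≤ frobNorm (A - B)
    · calc frobNorm (A - p0.1 * p0.2)
          ≤ frobNorm (A - (0 : Matrix (Fin m) (Fin r) ℝ) * (0 : Matrix (Fin r) (Fin n) ℝ)) :=
            hmin 0 0 (fun i k => by simp) (fun k j => by simp [hmc0])
        _ = frobNorm A := by rw [Matrix.zero_mul, sub_zero]
        _ ≤ frobNorm (A - B) := hcase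
    · push_neg at hcase
      have hBbd : ∀ i j, |B i j| ≤ 2 * frobNorm A := by
        intro i j
        have hij : B i j = A i j - (A - B) i j := by simp [Matrix.sub_apply]
        rw [hij]
        calc |A i j - (A - B) i j| ≤ |A i j| + |(A - B) i j| := abs_sub _ _
          _ ≤ frobNorm A + frobNorm (A - B) :=
              add_le_add (abs_entry_le_frobNorm A i j) (abs_entry_le_frobNorm (A - B) i j)
          _ ≤ frobNorm A + frobNorm A := add_le_add_right hcase.le _
          _ = 2 * frobNorm A := by ring
      obtain ⟨U, V, hUV, hU, hV⟩ := factor B hB (2 * frobNorm A) hBbd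
      calc frobNorm (A - p0.1 * p0.2) ≤ frobNorm (A - U * V) := hmin U V hU hV
        _ = frobNorm (A - B) := by rw [hUV]
end
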